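/- (Corollary about moment bounds.) Consider a reaction network on S ⊆ ℕⁿ with rational propensities a_j = s_j/o and let d ≥ d_o. For a polynomial f of degree at most d with coefficient vector 𝐟, define l_f^d := inf{𝐟ᵀy : y ∈ 𝓔^d} and u_f^d := sup{𝐟ᵀy : y ∈ 𝓔^d}. Then for every stationary solution π of the CME with finite rational moments of order up to d+1, one has l_f^d ≤ ⟨f/o⟩ ≤ u_f^d. Moreover these bounds are monotone in d: l_f^d ≤ l_f^{d+1} ≤ … ≤ ⟨f/o⟩ ≤ … ≤ u_f^{d+1} ≤ u_f^d, whenever π has finite rational moments of the corresponding orders. -/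

import Mathlib

open MvPolynomial

/-- The rational moment `z_β = ⟨x^β / o⟩` of `π` w.r.t. the denominator polynomial `o`. -/
noncomputable def ratMoment {n : ℕ} (o : MvPolynomial (Fin n) ℝ)
    (π : (Fin n → ℕ) → ℝ) (β : Fin n →₀ ℕ) : ℝ :=
  ∑' x : Fin n → ℕ, (∏ i, (x i : ℝ) ^ β i) / eval (fun i => (x i : ℝ)) o * π x

/-- `π` has finite rational moments `⟨x^β / o⟩` for all multi-indices `β` with `|β| ≤ d`. -/
def HasRatMoments {n : ℕ} (o : MvPolynomial (Fin n) ℝ)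
    (π : (Fin n → ℕ) → ℝ) (d : ℕ) : Prop :=
  ∀ β : Fin n →₀ ℕ, (∑ i, β i) ≤ d →
    Summable (fun x : Fin n → ℕ =>
      (∏ i, (x i : ℝ) ^ β i) / eval (fun i => (x i : ℝ)) o * π x)

private lemma weight_eq {n : ℕ} (β : Fin n →₀ ℕ) : (β.sum fun _ e => e) = ∑ i, β i :=
  Finsupp.sum_fintype _ _ (fun _ => rfl)

private lemma tsum_poly_div {n : ℕ} {o : MvPolynomial (Fin n) ℝ} {π : (Fin n → ℕ) → ℝ}
    {D : ℕ} (hm : HasRatMoments o π D) (p : MvPolynomial (Fin n) ℝ)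
    (hp : p.totalDegree ≤ D) :
    Summable (fun x : Fin n → ℕ =>
        eval (fun i => (x i : ℝ)) p / eval (fun i => (x i : ℝ)) o * π x) ∧
      ∑' x : Fin n → ℕ, eval (fun i => (x i : ℝ)) p / eval (fun i => (x i : ℝ)) o * π x
        = ∑ β ∈ p.support, coeff β p * ratMoment o π β := by
  have key : ∀ x : Fin n → ℕ,
      eval (fun i => (x i : ℝ)) p / eval (fun i => (x i : ℝ)) o * π x
        = ∑ β ∈ p.support, coeff β p *
            ((∏ i, (x i : ℝ) ^ β i) / eval (fun i => (x i : ℝ)) o * π x) := by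
    intro x
    rw [eval_eq', Finset.sum_div, Finset.sum_mul]
    exact Finset.sum_congr rfl fun β _ => by ring
  have hβsum : ∀ β ∈ p.support, Summable (fun x : Fin n → ℕ =>
      coeff β p * ((∏ i, (x i : ℝ) ^ β i) / eval (fun i => (x i : ℝ)) o * π x)) := by
    intro β hβ
    refine Summable.mul_left _ (hm β ?_)
    rw [← weight_eq]; exact (le_totalDegree hβ).trans hp
  constructor
  · exact Summable.congr (summable_sum hβsum) fun x => (key x).symm
  · calc ∑' x : Fin n → ℕ, eval (fun i => (x i : ℝ)) p / eval (fun i => (x i : ℝ)) o * π x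
        = ∑' x : Fin n → ℕ, ∑ β ∈ p.support, coeff β p *
            ((∏ i, (x i : ℝ) ^ β i) / eval (fun i => (x i : ℝ)) o * π x) := tsum_congr key
      _ = ∑ β ∈ p.support, ∑' x : Fin n → ℕ, coeff β p *
            ((∏ i, (x i : ℝ) ^ β i) / eval (fun i => (x i : ℝ)) o * π x) := Summable.tsum_finsetSum hβsum
      _ = ∑ β ∈ p.support, coeff β p * ratMoment o π β := by
          refine Finset.sum_congr rfl fun β hβ => ?_
          rw [ratMoment]
          exact (hm β (by rw [← weight_eq]; exact (le_totalDegree hβ).trans hp)).tsum_mul_left _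

private lemma deg_prod_shift {n : ℕ} (c : Fin n → ℝ) (α : Fin n →₀ ℕ) :
    (∏ i, (X i + C (c i) : MvPolynomial (Fin n) ℝ) ^ α i).totalDegree ≤ ∑ i, α i := by
  refine (totalDegree_finset_prod _ _).trans (Finset.sum_le_sum fun i _ => ?_)
  refine (totalDegree_pow _ _).trans ?_
  have h1 : (X i + C (c i) : MvPolynomial (Fin n) ℝ).totalDegree ≤ 1 := by
    refine (totalDegree_add _ _).trans ?_
    simp [totalDegree_X, totalDegree_C]
  calc α i * (X i + C (c i) : MvPolynomial (Fin n) ℝ).totalDegree ≤ α i * 1 :=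
        Nat.mul_le_mul_left _ h1
    _ = α i := mul_one _

private lemma deg_prod_X {n : ℕ} (α : Fin n →₀ ℕ) :
    (∏ i, (X i : MvPolynomial (Fin n) ℝ) ^ α i).totalDegree ≤ ∑ i, α i := by
  refine (totalDegree_finset_prod _ _).trans (Finset.sum_le_sum fun i _ => ?_)
  refine (totalDegree_pow _ _).trans ?_
  rw [totalDegree_X, mul_one]

private lemma summable_pa_shift {n m : ℕ} {v : Fin m → Fin n → ℤ}
    {s : Fin m → MvPolynomial (Fin n) ℝ} {o : MvPolynomial (Fin n) ℝ}
    {π : (Fin n → ℕ) → ℝ} {da D : ℕ}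
    (hda : ∀ j, (s j).totalDegree ≤ da)
    {a : Fin m → (Fin n → ℕ) → ℝ}
    (ha : ∀ j x, a j x = eval (fun i => (x i : ℝ)) (s j) / eval (fun i => (x i : ℝ)) o)
    (hm : HasRatMoments o π D) (α : Fin n →₀ ℕ) (hdeg : da + ∑ i, α i ≤ D) (j : Fin m) :
    Summable (fun x : Fin n → ℕ => π x * a j x * ∏ i, ((x i : ℝ) + (v j i : ℝ)) ^ α i) := by
  have hp : (s j * ∏ i, (X i + C ((v j i : ℝ))) ^ α i).totalDegree ≤ D :=
    le_trans (le_trans (totalDegree_mul _ _)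
      (add_le_add (hda j) (deg_prod_shift _ α))) hdeg
  refine ((tsum_poly_div hm _ hp).1).congr fun x => ?_
  rw [map_mul, ha j x]
  rw [show eval (fun i => (x i : ℝ)) (∏ i, (X i + C ((v j i : ℝ))) ^ α i)
      = ∏ i, ((x i : ℝ) + (v j i : ℝ)) ^ α i by simp]
  ring

private lemma summable_pa_X {n m : ℕ}
    {s : Fin m → MvPolynomial (Fin n) ℝ} {o : MvPolynomial (Fin n) ℝ}
    {π : (Fin n → ℕ) → ℝ} {da D : ℕ}
    (hda : ∀ j, (s j).totalDegree ≤ da)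
    {a : Fin m → (Fin n → ℕ) → ℝ}
    (ha : ∀ j x, a j x = eval (fun i => (x i : ℝ)) (s j) / eval (fun i => (x i : ℝ)) o)
    (hm : HasRatMoments o π D) (α : Fin n →₀ ℕ) (hdeg : da + ∑ i, α i ≤ D) (j : Fin m) :
    Summable (fun x : Fin n → ℕ => π x * a j x * ∏ i, (x i : ℝ) ^ α i) := by
  have hp : (s j * ∏ i, (X i : MvPolynomial (Fin n) ℝ) ^ α i).totalDegree ≤ D :=
    le_trans (le_trans (totalDegree_mul _ _)
      (add_le_add (hda j) (deg_prod_X α))) hdeg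
  refine ((tsum_poly_div hm _ hp).1).congr fun x => ?_
  rw [map_mul, ha j x]
  rw [show eval (fun i => (x i : ℝ)) (∏ i, (X i : MvPolynomial (Fin n) ℝ) ^ α i)
      = ∏ i, (x i : ℝ) ^ α i by simp]
  ring

private lemma core {n m : ℕ} {S : Set (Fin n → ℕ)}
    {v : Fin m → Fin n → ℤ} {s : Fin m → MvPolynomial (Fin n) ℝ}
    {o : MvPolynomial (Fin n) ℝ} {da D : ℕ}
    (hda : ∀ j, (s j).totalDegree ≤ da)
    {a : Fin m → (Fin n → ℕ) → ℝ}
    (ha : ∀ j x, a j x = eval (fun i => (x i : ℝ)) (s j) / eval (fun i => (x i : ℝ)) o)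
    (ha_nonneg : ∀ j, ∀ x ∈ S, 0 ≤ a j x)
    (hclosed : ∀ x ∈ S, ∀ j, a j x ≠ 0 → ∃ y ∈ S, ∀ i, (y i : ℤ) = (x i : ℤ) + v j i)
    {q : (Fin n → ℕ) → (Fin n → ℕ) → ℝ}
    (hq_offdiag : ∀ x y, y ≠ x →
      q x y = ∑ j ∈ Finset.univ.filter (fun j => ∀ i, (y i : ℤ) = (x i : ℤ) + v j i), a j x)
    (hq_diag : ∀ x, q x x = -∑ j, a j x)
    {π : (Fin n → ℕ) → ℝ} (hπ_nonneg : ∀ x, 0 ≤ π x) (hπ_supp : ∀ x ∉ S, π x = 0)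
    (hπ_stat : ∀ x ∈ S, HasSum (fun y => π y * q y x) 0)
    (hm : HasRatMoments o π D)
    (α : Fin n →₀ ℕ) (hdeg : da + ∑ i, α i ≤ D) :
    ∑' x : Fin n → ℕ, ∑ j, π x * a j x * ∏ i, ((x i : ℝ) + (v j i : ℝ)) ^ α i
      = (∑' x : Fin n → ℕ, ∑ j, π x * a j x * ∏ i, (x i : ℝ) ^ α i)
        + ∑' x : Fin n → ℕ, ∑ j,
            (if v j = 0 then π x * a j x * ∏ i, (x i : ℝ) ^ α i else 0) := by
  classical
  set φ : (Fin n → ℕ) → ℝ := fun y => ∏ i, (y i : ℝ) ^ α i with hφdef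
  set ψ : Fin m → (Fin n → ℕ) → ℝ :=
    fun j x => ∏ i, ((x i : ℝ) + (v j i : ℝ)) ^ α i with hψdef
  have hφ_nonneg : ∀ y, 0 ≤ φ y := fun y =>
    Finset.prod_nonneg fun i _ => pow_nonneg (Nat.cast_nonneg _) _
  have hxS : ∀ x : Fin n → ℕ, π x ≠ 0 → x ∈ S := by
    intro x hx; by_contra h; exact hx (hπ_supp x h)
  set F : (Fin n → ℕ) → (Fin n → ℕ) → ℝ :=
    fun x y => if y = x then 0 else π x * q x y * φ y with hFdef
  -- nonnegativity
  have hF0 : ∀ x y, 0 ≤ F x y := by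
    intro x y
    by_cases h : y = x
    · simp [hFdef, h]
    · simp only [hFdef, if_neg h]
      rcases eq_or_ne (π x) 0 with h0 | h0
      · simp [h0]
      · have hq : 0 ≤ q x y := by
          rw [hq_offdiag x y h]
          exact Finset.sum_nonneg fun j _ => ha_nonneg j x (hxS x h0)
        exact mul_nonneg (mul_nonneg (hπ_nonneg x) hq) (hφ_nonneg y)
  set G : (Fin n → ℕ) → Fin m → (Fin n → ℕ) → ℝ :=
    fun x j y => if (y ≠ x ∧ ∀ i, (y i : ℤ) = (x i : ℤ) + v j i)
      then π x * a j x * ψ j x else 0 with hGdef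
  have hFG : ∀ x y, F x y = ∑ j, G x j y := by
    intro x y
    by_cases h : y = x
    · simp [hFdef, hGdef, h]
    · have hψφ : ∀ j : Fin m, (∀ i, (y i : ℤ) = (x i : ℤ) + v j i) → ψ j x = φ y := by
        intro j hj
        refine Finset.prod_congr rfl fun i _ => ?_
        have h1 : ((x i : ℝ) + (v j i : ℝ)) = (y i : ℝ) := by
          have := hj i; push_cast; exact_mod_cast this.symm
        rw [h1]
      calc F x y = π x * (∑ j ∈ Finset.univ.filter
            (fun j => ∀ i, (y i : ℤ) = (x i : ℤ) + v j i), a j x) * φ y := by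
            rw [hFdef]; simp only [if_neg h]; rw [hq_offdiag x y h]
        _ = ∑ j ∈ Finset.univ.filter
            (fun j => ∀ i, (y i : ℤ) = (x i : ℤ) + v j i), π x * a j x * φ y := by
            rw [Finset.mul_sum, Finset.sum_mul]
        _ = ∑ j ∈ Finset.univ.filter
            (fun j => ∀ i, (y i : ℤ) = (x i : ℤ) + v j i), π x * a j x * ψ j x :=
            Finset.sum_congr rfl fun j hj => by
              rw [hψφ j (Finset.mem_filter.1 hj).2]
        _ = ∑ j, if (∀ i, (y i : ℤ) = (x i : ℤ) + v j i)
            then π x * a j x * ψ j x else 0 := Finset.sum_filter _ _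
        _ = ∑ j, G x j y := Finset.sum_congr rfl fun j _ => by
              rw [hGdef]; simp [h]
  have hG : ∀ x j, HasSum (G x j) (if v j = 0 then 0 else π x * a j x * ψ j x) := by
    intro x j
    by_cases hπa : π x * a j x = 0
    · have hz : G x j = fun _ => 0 := funext fun y => by
        rw [hGdef]; dsimp only; split
        · rw [hπa, zero_mul]
        · rfl
      rw [hz]
      have : (if v j = 0 then 0 else π x * a j x * ψ j x) = 0 := by
        split
        · rfl
        · rw [hπa, zero_mul]
      rw [this]; exact hasSum_zero
    · have hπx : π x ≠ 0 := fun h => hπa (by rw [h, zero_mul])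
      have haj : a j x ≠ 0 := fun h => hπa (by rw [h, mul_zero])
      obtain ⟨y₀, hy₀S, hy₀⟩ := hclosed x (hxS x hπx) j haj
      by_cases hv : v j = 0
      · have hz : G x j = fun _ => 0 := funext fun y => by
          rw [hGdef]; dsimp only; rw [if_neg]
          rintro ⟨hyx, hy⟩
          refine hyx (funext fun i => ?_)
          have := hy i; rw [congrFun hv i, Pi.zero_apply] at this
          exact_mod_cast this.trans (add_zero _)
        rw [hz, if_pos hv]; exact hasSum_zero
      · rw [if_neg hv]
        have hy₀x : y₀ ≠ x := by
          obtain ⟨i, hi⟩ : ∃ i, v j i ≠ 0 := by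
            by_contra hno; push_neg at hno; exact hv (funext hno)
          intro he
          have := hy₀ i; rw [he] at this; omega
        have hz : G x j = fun y => if y = y₀ then π x * a j x * ψ j x else 0 :=
          funext fun y => by
            rw [hGdef]; dsimp only
            by_cases hyy : y = y₀
            · rw [if_pos hyy, if_pos]
              subst hyy; exact ⟨hy₀x, hy₀⟩
            · rw [if_neg hyy, if_neg]
              rintro ⟨-, hy⟩
              refine hyy (funext fun i => ?_)
              have h1 := hy i; have h2 := hy₀ i; omega
        rw [hz]; exact hasSum_ite_eq y₀ _
  have F1 : ∀ x, HasSum (F x) (∑ j, if v j = 0 then 0 else π x * a j x * ψ j x) := by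
    intro x
    have := hasSum_sum (s := Finset.univ) (fun j _ => hG x j)
    have hFeq : F x = fun y => ∑ j, G x j y := funext (hFG x)
    rw [hFeq]; exact this
  have hw : ∀ x, (∑ j, if v j = 0 then 0 else π x * a j x * ψ j x)
      = (∑ j, π x * a j x * ψ j x)
        - ∑ j, (if v j = 0 then π x * a j x * φ x else 0) := by
    intro x
    rw [← Finset.sum_sub_distrib]
    refine Finset.sum_congr rfl fun j _ => ?_
    by_cases hv : v j = 0
    · have hψx : ψ j x = φ x := by
        refine Finset.prod_congr rfl fun i _ => ?_
        rw [congrFun hv i, Pi.zero_apply]; push_cast; rw [add_zero]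
      rw [if_pos hv, if_pos hv, hψx]; ring
    · rw [if_neg hv, if_neg hv]; ring
  have F2 : ∀ y, HasSum (fun x => F x y) (∑ j, π y * a j y * φ y) := by
    intro y
    have hsum_eq : ∑ j, π y * a j y * φ y = π y * (∑ j, a j y) * φ y := by
      rw [Finset.mul_sum, Finset.sum_mul]
    by_cases hyS : y ∈ S
    · have h1 : HasSum (fun x => π x * q x y * φ y) (0 * φ y) :=
        (hπ_stat y hyS).mul_right (φ y)
      have h2 := h1.update y 0
      have heq : (fun x => F x y)
          = Function.update (fun x => π x * q x y * φ y) y 0 := by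
        funext x
        by_cases hxy : x = y
        · subst hxy; rw [Function.update_self, hFdef]; simp
        · rw [Function.update_of_ne hxy, hFdef]
          dsimp only; rw [if_neg (Ne.symm hxy)]
      rw [heq, hsum_eq]
      rw [show (π y * ∑ j, a j y) * φ y = 0 - π y * q y y * φ y + 0 * φ y by
        rw [hq_diag y]; ring]
      exact h2
    · have hπy : π y = 0 := hπ_supp y hyS
      have hzero : (fun x => F x y) = fun _ => 0 := funext fun x => by
        by_cases hxy : y = x
        · rw [hFdef]; dsimp only; rw [if_pos hxy]
        · rw [hFdef]; dsimp only; rw [if_neg hxy]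
          rcases eq_or_ne (π x) 0 with h0 | h0
          · rw [h0, zero_mul, zero_mul]
          · have hq0 : q x y = 0 := by
              rw [hq_offdiag x y hxy]
              refine Finset.sum_eq_zero fun j hj => ?_
              by_contra hne
              obtain ⟨y', hy'S, hy'⟩ := hclosed x (hxS x h0) j hne
              have hyy : y' = y := funext fun i => by
                have h1 := (Finset.mem_filter.1 hj).2 i
                have h2 := hy' i; omega
              exact hyS (hyy ▸ hy'S)
            rw [hq0, mul_zero, zero_mul]
      rw [hzero]
      have : ∑ j, π y * a j y * φ y = 0 :=
        Finset.sum_eq_zero fun j _ => by rw [hπy, zero_mul, zero_mul]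
      rw [this]; exact hasSum_zero
  have hSumPsi : ∀ j, Summable (fun x => π x * a j x * ψ j x) :=
    summable_pa_shift hda ha hm α hdeg
  have hSumPhi : ∀ j, Summable (fun x => π x * a j x * φ x) :=
    summable_pa_X hda ha hm α hdeg
  have hAx : Summable (fun x => ∑ j, π x * a j x * ψ j x) :=
    summable_sum fun j _ => hSumPsi j
  have hCx : Summable (fun x => ∑ j, if v j = 0 then π x * a j x * φ x else 0) :=
    summable_sum fun j _ => by
      by_cases hv : v j = 0
      · simp only [if_pos hv]; exact hSumPhi j
      · simp only [if_neg hv]; exact summable_zero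
  have hRow : Summable (fun x => ∑' y, F x y) := by
    refine Summable.congr (hAx.sub hCx) fun x => ?_
    rw [(F1 x).tsum_eq, hw x]
  have hunc : Summable (Function.uncurry F) :=
    (summable_prod_of_nonneg (fun p => hF0 p.1 p.2)).2 ⟨fun x => (F1 x).summable, hRow⟩
  have key : ∑' y, ∑' x, F x y = ∑' x, ∑' y, F x y := Summable.tsum_comm hunc
  have hleft : ∑' y, ∑' x, F x y = ∑' y, ∑ j, π y * a j y * φ y :=
    tsum_congr fun y => (F2 y).tsum_eq
  have hright : ∑' x, ∑' y, F x y
      = (∑' x, ∑ j, π x * a j x * ψ j x)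
        - ∑' x, ∑ j, (if v j = 0 then π x * a j x * φ x else 0) := by
    rw [show (fun x => ∑' y, F x y) = fun x =>
        (∑ j, π x * a j x * ψ j x) - ∑ j, (if v j = 0 then π x * a j x * φ x else 0)
      from funext fun x => by rw [(F1 x).tsum_eq, hw x]]
    exact Summable.tsum_sub hAx hCx
  rw [hleft, hright] at key
  linarith

private lemma mono_add {n : ℕ} (x : Fin n → ℕ) (γ δ : Fin n →₀ ℕ) :
    ∏ i, (x i : ℝ) ^ ((γ + δ) i)
      = (∏ i, (x i : ℝ) ^ (γ i)) * ∏ i, (x i : ℝ) ^ (δ i) := by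
  rw [← Finset.prod_mul_distrib]
  exact Finset.prod_congr rfl fun i _ => by rw [Finsupp.add_apply, pow_add]

private lemma mono_single {n : ℕ} (x : Fin n → ℕ) (i₀ : Fin n) :
    ∏ i, (x i : ℝ) ^ ((Finsupp.single i₀ 1) i) = x i₀ := by
  rw [Finset.prod_eq_single i₀]
  · rw [Finsupp.single_eq_same, pow_one]
  · intro i _ hne; rw [Finsupp.single_eq_of_ne' (Ne.symm hne), pow_zero]
  · intro h; exact absurd (Finset.mem_univ i₀) h

private lemma weight_add {n : ℕ} (γ δ : Fin n →₀ ℕ) :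
    (∑ i, (γ + δ) i) = (∑ i, γ i) + ∑ i, δ i := by
  simp [Finsupp.add_apply, Finset.sum_add_distrib]

private lemma null_reaction {n m : ℕ} {S : Set (Fin n → ℕ)}
    {v : Fin m → Fin n → ℤ} {s : Fin m → MvPolynomial (Fin n) ℝ}
    {o : MvPolynomial (Fin n) ℝ} {da D : ℕ}
    (hda : ∀ j, (s j).totalDegree ≤ da)
    {a : Fin m → (Fin n → ℕ) → ℝ}
    (ha : ∀ j x, a j x = eval (fun i => (x i : ℝ)) (s j) / eval (fun i => (x i : ℝ)) o)
    (ha_nonneg : ∀ j, ∀ x ∈ S, 0 ≤ a j x)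
    (hclosed : ∀ x ∈ S, ∀ j, a j x ≠ 0 → ∃ y ∈ S, ∀ i, (y i : ℤ) = (x i : ℤ) + v j i)
    {q : (Fin n → ℕ) → (Fin n → ℕ) → ℝ}
    (hq_offdiag : ∀ x y, y ≠ x →
      q x y = ∑ j ∈ Finset.univ.filter (fun j => ∀ i, (y i : ℤ) = (x i : ℤ) + v j i), a j x)
    (hq_diag : ∀ x, q x x = -∑ j, a j x)
    {π : (Fin n → ℕ) → ℝ} (hπ_nonneg : ∀ x, 0 ≤ π x) (hπ_supp : ∀ x ∉ S, π x = 0)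
    (hπ_stat : ∀ x ∈ S, HasSum (fun y => π y * q y x) 0)
    (hm : HasRatMoments o π D) (hdaD : da ≤ D) :
    ∀ j, v j = 0 → ∀ x, π x * a j x = 0 := by
  classical
  have hxS : ∀ x : Fin n → ℕ, π x ≠ 0 → x ∈ S := by
    intro x hx; by_contra h; exact hx (hπ_supp x h)
  have hdeg0 : da + ∑ i, (0 : Fin n →₀ ℕ) i ≤ D := by simpa using hdaD
  have hc := core hda ha ha_nonneg hclosed hq_offdiag hq_diag hπ_nonneg hπ_supp hπ_stat
    hm 0 hdeg0
  simp only [Finsupp.coe_zero, Pi.zero_apply, pow_zero, Finset.prod_const_one, mul_one] at hc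
  have hC0 : ∑' x : Fin n → ℕ, ∑ j, (if v j = 0 then π x * a j x else 0) = 0 := by
    linarith
  have hπa_nonneg : ∀ (j : Fin m) (x : Fin n → ℕ), 0 ≤ π x * a j x := by
    intro j x
    rcases eq_or_ne (π x) 0 with h | h
    · rw [h, zero_mul]
    · exact mul_nonneg (hπ_nonneg x) (ha_nonneg j x (hxS x h))
  have hterm_nonneg : ∀ x : Fin n → ℕ,
      0 ≤ ∑ j, (if v j = 0 then π x * a j x else 0) := by
    intro x
    refine Finset.sum_nonneg fun j _ => ?_
    split
    · exact hπa_nonneg j x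
    · exact le_rfl
  have hSum : Summable (fun x : Fin n → ℕ =>
      ∑ j, (if v j = 0 then π x * a j x else 0)) := by
    refine summable_sum fun j _ => ?_
    by_cases hv : v j = 0
    · simp only [if_pos hv]
      exact (summable_pa_X hda ha hm 0 hdeg0 j).congr fun x => by simp
    · simp only [if_neg hv]; exact summable_zero
  intro j hv x
  have hxle : ∑ j, (if v j = 0 then π x * a j x else 0) = 0 := by
    have h1 := Summable.le_tsum hSum x fun y _ => hterm_nonneg y
    have h2 := hterm_nonneg x
    rw [hC0] at h1
    linarith
  have := (Finset.sum_eq_zero_iff_of_nonneg (fun j _ => by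
    split
    · exact hπa_nonneg _ x
    · exact le_rfl)).1 hxle j (Finset.mem_univ j)
  rwa [if_pos hv] at this

/-- The polynomial `x ↦ ∑ⱼ sⱼ(x) ((x + vⱼ)^α - x^α)` appearing in the `α`-moment
equation. -/
noncomputable def momentPoly {n m : ℕ} (v : Fin m → Fin n → ℤ)
    (s : Fin m → MvPolynomial (Fin n) ℝ) (α : Fin n →₀ ℕ) : MvPolynomial (Fin n) ℝ :=
  ∑ j, s j * ((∏ i, (X i + C ((v j i : ℝ))) ^ α i) -
    ∏ i, (X i : MvPolynomial (Fin n) ℝ) ^ α i)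

private lemma deg_momentPoly {n m : ℕ} (v : Fin m → Fin n → ℤ)
    (s : Fin m → MvPolynomial (Fin n) ℝ) {da : ℕ} (hda : ∀ j, (s j).totalDegree ≤ da)
    (α : Fin n →₀ ℕ) : (momentPoly v s α).totalDegree ≤ da + ∑ i, α i := by
  refine (totalDegree_finset_sum _ _).trans (Finset.sup_le fun j _ => ?_)
  refine (totalDegree_mul _ _).trans (add_le_add (hda j) ?_)
  refine (totalDegree_sub _ _).trans (max_le (deg_prod_shift _ α) (deg_prod_X α))

private lemma moment_eq {n m : ℕ} {S : Set (Fin n → ℕ)}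
    {v : Fin m → Fin n → ℤ} {s : Fin m → MvPolynomial (Fin n) ℝ}
    {o : MvPolynomial (Fin n) ℝ} {da D : ℕ}
    (hda : ∀ j, (s j).totalDegree ≤ da)
    {a : Fin m → (Fin n → ℕ) → ℝ}
    (ha : ∀ j x, a j x = eval (fun i => (x i : ℝ)) (s j) / eval (fun i => (x i : ℝ)) o)
    (ha_nonneg : ∀ j, ∀ x ∈ S, 0 ≤ a j x)
    (hclosed : ∀ x ∈ S, ∀ j, a j x ≠ 0 → ∃ y ∈ S, ∀ i, (y i : ℤ) = (x i : ℤ) + v j i)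
    {q : (Fin n → ℕ) → (Fin n → ℕ) → ℝ}
    (hq_offdiag : ∀ x y, y ≠ x →
      q x y = ∑ j ∈ Finset.univ.filter (fun j => ∀ i, (y i : ℤ) = (x i : ℤ) + v j i), a j x)
    (hq_diag : ∀ x, q x x = -∑ j, a j x)
    {π : (Fin n → ℕ) → ℝ} (hπ_nonneg : ∀ x, 0 ≤ π x) (hπ_supp : ∀ x ∉ S, π x = 0)
    (hπ_stat : ∀ x ∈ S, HasSum (fun y => π y * q y x) 0)
    (hm : HasRatMoments o π D)
    (α : Fin n →₀ ℕ) (hdeg : da + ∑ i, α i ≤ D) :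
    ∑ β ∈ (momentPoly v s α).support,
      coeff β (momentPoly v s α) * ratMoment o π β = 0 := by
  classical
  have hdegM : (momentPoly v s α).totalDegree ≤ D :=
    (deg_momentPoly v s hda α).trans hdeg
  rw [← (tsum_poly_div hm _ hdegM).2]
  have hnull : ∀ j, v j = 0 → ∀ x, π x * a j x = 0 :=
    null_reaction hda ha ha_nonneg hclosed hq_offdiag hq_diag hπ_nonneg hπ_supp hπ_stat
      hm (le_trans (Nat.le_add_right _ _) hdeg)
  have hpt : ∀ x : Fin n → ℕ,
      eval (fun i => (x i : ℝ)) (momentPoly v s α) / eval (fun i => (x i : ℝ)) o * π x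
        = ∑ j, (π x * a j x * ∏ i, ((x i : ℝ) + (v j i : ℝ)) ^ α i
            - π x * a j x * ∏ i, (x i : ℝ) ^ α i) := by
    intro x
    have hev : eval (fun i => (x i : ℝ)) (momentPoly v s α)
        = ∑ j, eval (fun i => (x i : ℝ)) (s j) *
            ((∏ i, ((x i : ℝ) + (v j i : ℝ)) ^ α i) - ∏ i, (x i : ℝ) ^ α i) := by
      simp [momentPoly]
    rw [hev, Finset.sum_div, Finset.sum_mul]
    refine Finset.sum_congr rfl fun j _ => ?_
    rw [ha j x]; ring
  rw [tsum_congr hpt]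
  have hSumPsi : ∀ j, Summable
      (fun x : Fin n → ℕ => π x * a j x * ∏ i, ((x i : ℝ) + (v j i : ℝ)) ^ α i) :=
    summable_pa_shift hda ha hm α hdeg
  have hSumPhi : ∀ j, Summable
      (fun x : Fin n → ℕ => π x * a j x * ∏ i, (x i : ℝ) ^ α i) :=
    summable_pa_X hda ha hm α hdeg
  have hsplit : ∀ x : Fin n → ℕ,
      (∑ j, (π x * a j x * ∏ i, ((x i : ℝ) + (v j i : ℝ)) ^ α i
          - π x * a j x * ∏ i, (x i : ℝ) ^ α i))
        = (∑ j, π x * a j x * ∏ i, ((x i : ℝ) + (v j i : ℝ)) ^ α i)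
          - ∑ j, π x * a j x * ∏ i, (x i : ℝ) ^ α i := fun x =>
    Finset.sum_sub_distrib _ _
  rw [tsum_congr hsplit,
    Summable.tsum_sub (summable_sum fun j _ => hSumPsi j) (summable_sum fun j _ => hSumPhi j)]
  have hc := core hda ha ha_nonneg hclosed hq_offdiag hq_diag hπ_nonneg hπ_supp hπ_stat
    hm α hdeg
  have hC : ∑' x : Fin n → ℕ, ∑ j,
      (if v j = 0 then π x * a j x * ∏ i, (x i : ℝ) ^ α i else 0) = 0 := by
    have : ∀ x : Fin n → ℕ, (∑ j,
        (if v j = 0 then π x * a j x * ∏ i, (x i : ℝ) ^ α i else 0)) = 0 := by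
      intro x
      refine Finset.sum_eq_zero fun j _ => ?_
      split
      · next hv => rw [hnull j hv x, zero_mul]
      · rfl
    rw [tsum_congr this, tsum_zero]
  rw [hC] at hc
  rw [hc]; ring

/-- The spectrahedron `𝓔^d`: vectors `y = (y_β)` satisfying the normalisation
`yᵀ𝐨 = 1`, the moment equations `yᵀ𝐠_α = 0` for `|α| ≤ d - d_a + 1`, and positive
semidefiniteness of the localising matrices `M_d⁰(y), …, M_dⁿ(y)` (expressed via their
quadratic forms on coefficient vectors of polynomials of the appropriate degrees). -/
def spectrahedron {n m : ℕ} (v : Fin m → Fin n → ℤ) (s : Fin m → MvPolynomial (Fin n) ℝ)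
    (o : MvPolynomial (Fin n) ℝ) (da d : ℕ) : Set ((Fin n →₀ ℕ) → ℝ) :=
  {y | (∑ β ∈ o.support, coeff β o * y β = 1) ∧
    (∀ α : Fin n →₀ ℕ, ((∑ i, (α i : ℤ)) ≤ (d : ℤ) - (da : ℤ) + 1) →
      ∑ β ∈ (momentPoly v s α).support, coeff β (momentPoly v s α) * y β = 0) ∧
    (∀ g : MvPolynomial (Fin n) ℝ, g.totalDegree ≤ d / 2 →
      0 ≤ ∑ α ∈ g.support, ∑ β ∈ g.support, coeff α g * coeff β g * y (α + β)) ∧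
    (∀ i₀ : Fin n, ∀ g : MvPolynomial (Fin n) ℝ, g.totalDegree ≤ (d - 1) / 2 →
      0 ≤ ∑ α ∈ g.support, ∑ β ∈ g.support,
        coeff α g * coeff β g * y (α + β + Finsupp.single i₀ 1))}

private lemma quad_nonneg {n : ℕ} {o : MvPolynomial (Fin n) ℝ} {π : (Fin n → ℕ) → ℝ}
    {k : ℕ} (hm : HasRatMoments o π (k + 1)) {S : Set (Fin n → ℕ)}
    (ho_pos : ∀ x ∈ S, 0 < eval (fun i => (x i : ℝ)) o)
    (hπ_nonneg : ∀ x, 0 ≤ π x) (hπ_supp : ∀ x ∉ S, π x = 0)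
    (g : MvPolynomial (Fin n) ℝ) (δ : Fin n →₀ ℕ)
    (hδ : ∀ α' ∈ g.support, ∀ β' ∈ g.support, (∑ i, (α' + β' + δ) i) ≤ k + 1)
    (hδ_nonneg : ∀ x : Fin n → ℕ, 0 ≤ ∏ i, (x i : ℝ) ^ δ i) :
    0 ≤ ∑ α' ∈ g.support, ∑ β' ∈ g.support,
      coeff α' g * coeff β' g * ratMoment o π (α' + β' + δ) := by
  classical
  have hxS : ∀ x : Fin n → ℕ, π x ≠ 0 → x ∈ S := by
    intro x hx; by_contra h; exact hx (hπ_supp x h)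
  have hS : ∀ α' ∈ g.support, ∀ β' ∈ g.support, Summable (fun x : Fin n → ℕ =>
      coeff α' g * coeff β' g *
        ((∏ i, (x i : ℝ) ^ ((α' + β' + δ) i)) / eval (fun i => (x i : ℝ)) o * π x)) := by
    intro α' hα' β' hβ'
    exact Summable.mul_left _ (hm _ (hδ α' hα' β' hβ'))
  have key : ∑ α' ∈ g.support, ∑ β' ∈ g.support,
      coeff α' g * coeff β' g * ratMoment o π (α' + β' + δ)
      = ∑' x : Fin n → ℕ,
          ((∑ γ ∈ g.support, coeff γ g * ∏ i, (x i : ℝ) ^ γ i) ^ 2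
            * (∏ i, (x i : ℝ) ^ δ i)) / eval (fun i => (x i : ℝ)) o * π x := by
    have hpt : ∀ x : Fin n → ℕ,
        ((∑ γ ∈ g.support, coeff γ g * ∏ i, (x i : ℝ) ^ γ i) ^ 2
            * (∏ i, (x i : ℝ) ^ δ i)) / eval (fun i => (x i : ℝ)) o * π x
          = ∑ α' ∈ g.support, ∑ β' ∈ g.support, coeff α' g * coeff β' g *
              ((∏ i, (x i : ℝ) ^ ((α' + β' + δ) i)) / eval (fun i => (x i : ℝ)) o * π x) := by
      intro x
      rw [sq, Finset.sum_mul_sum, Finset.sum_mul, Finset.sum_div, Finset.sum_mul]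
      refine Finset.sum_congr rfl fun α' _ => ?_
      rw [Finset.sum_mul, Finset.sum_div, Finset.sum_mul]
      refine Finset.sum_congr rfl fun β' _ => ?_
      rw [mono_add x (α' + β') δ, mono_add x α' β']
      ring
    rw [tsum_congr hpt]
    rw [Summable.tsum_finsetSum (fun α' hα' => summable_sum fun β' hβ' => hS α' hα' β' hβ')]
    refine Finset.sum_congr rfl fun α' hα' => ?_
    rw [Summable.tsum_finsetSum (fun β' hβ' => hS α' hα' β' hβ')]
    refine Finset.sum_congr rfl fun β' hβ' => ?_
    rw [ratMoment]
    exact ((hm _ (hδ α' hα' β' hβ')).tsum_mul_left _).symm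
  rw [key]
  refine tsum_nonneg fun x => ?_
  rcases eq_or_ne (π x) 0 with h | h
  · rw [h, mul_zero]
  · refine mul_nonneg (div_nonneg ?_ (ho_pos x (hxS x h)).le) (hπ_nonneg x)
    exact mul_nonneg (sq_nonneg _) (hδ_nonneg x)

private lemma mem_spectrahedron {n m : ℕ} {S : Set (Fin n → ℕ)}
    {v : Fin m → Fin n → ℤ} {s : Fin m → MvPolynomial (Fin n) ℝ}
    {o : MvPolynomial (Fin n) ℝ} {da k : ℕ}
    (ho_pos : ∀ x ∈ S, 0 < eval (fun i => (x i : ℝ)) o)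
    (hdo : o.totalDegree ≤ k)
    (hda : ∀ j, (s j).totalDegree ≤ da)
    {a : Fin m → (Fin n → ℕ) → ℝ}
    (ha : ∀ j x, a j x = eval (fun i => (x i : ℝ)) (s j) / eval (fun i => (x i : ℝ)) o)
    (ha_nonneg : ∀ j, ∀ x ∈ S, 0 ≤ a j x)
    (hclosed : ∀ x ∈ S, ∀ j, a j x ≠ 0 → ∃ y ∈ S, ∀ i, (y i : ℤ) = (x i : ℤ) + v j i)
    {q : (Fin n → ℕ) → (Fin n → ℕ) → ℝ}
    (hq_offdiag : ∀ x y, y ≠ x →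
      q x y = ∑ j ∈ Finset.univ.filter (fun j => ∀ i, (y i : ℤ) = (x i : ℤ) + v j i), a j x)
    (hq_diag : ∀ x, q x x = -∑ j, a j x)
    {π : (Fin n → ℕ) → ℝ} (hπ_nonneg : ∀ x, 0 ≤ π x) (hπ_supp : ∀ x ∉ S, π x = 0)
    (hπ_mass : HasSum π 1)
    (hπ_stat : ∀ x ∈ S, HasSum (fun y => π y * q y x) 0)
    (hm : HasRatMoments o π (k + 1)) :
    (fun β => ratMoment o π β) ∈ spectrahedron v s o da k := by
  classical
  have hxS : ∀ x : Fin n → ℕ, π x ≠ 0 → x ∈ S := by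
    intro x hx; by_contra h; exact hx (hπ_supp x h)
  refine ⟨?_, ?_, ?_, ?_⟩
  · -- normalisation
    show ∑ β ∈ o.support, coeff β o * ratMoment o π β = 1
    rw [← (tsum_poly_div hm o (hdo.trans (Nat.le_succ k))).2]
    have hpt : ∀ x : Fin n → ℕ,
        eval (fun i => (x i : ℝ)) o / eval (fun i => (x i : ℝ)) o * π x = π x := by
      intro x
      rcases eq_or_ne (π x) 0 with h | h
      · rw [h, mul_zero]
      · rw [div_self (ne_of_gt (ho_pos x (hxS x h))), one_mul]
    rw [tsum_congr hpt, hπ_mass.tsum_eq]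
  · -- moment equations
    intro α hα
    have hsum_cast : (∑ i, (α i : ℤ)) = ((∑ i, α i : ℕ) : ℤ) := by push_cast; rfl
    have h0 : (0 : ℤ) ≤ ∑ i, (α i : ℤ) :=
      Finset.sum_nonneg fun i _ => Int.natCast_nonneg _
    have hdeg : da + ∑ i, α i ≤ k + 1 := by
      rw [hsum_cast] at hα h0; omega
    exact moment_eq hda ha ha_nonneg hclosed hq_offdiag hq_diag hπ_nonneg hπ_supp
      hπ_stat hm α hdeg
  · -- PSD, M⁰
    intro g hg
    have h1 : ∀ γ ∈ g.support, (∑ i, γ i) ≤ k / 2 := fun γ hγ => by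
      rw [← weight_eq]; exact (le_totalDegree hγ).trans hg
    have h2 := quad_nonneg hm ho_pos hπ_nonneg hπ_supp g 0
      (fun α' hα' β' hβ' => by
        rw [add_zero, weight_add]
        have ha2 := h1 α' hα'; have hb2 := h1 β' hβ'; omega)
      (fun x => by simp)
    simpa using h2
  · -- PSD, localising matrices
    intro i₀ g hg
    have h1 : ∀ γ ∈ g.support, (∑ i, γ i) ≤ (k - 1) / 2 := fun γ hγ => by
      rw [← weight_eq]; exact (le_totalDegree hγ).trans hg
    have hδw : (∑ i, (Finsupp.single i₀ 1) i) = 1 := by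
      simp [Finsupp.single_apply]
    have h2 := quad_nonneg hm ho_pos hπ_nonneg hπ_supp g (Finsupp.single i₀ 1)
      (fun α' hα' β' hβ' => by
        rw [weight_add, weight_add, hδw]
        have ha2 := h1 α' hα'; have hb2 := h1 β' hβ'; omega)
      (fun x => by rw [mono_single]; exact Nat.cast_nonneg _)
    simpa using h2

private lemma spectrahedron_antitone {n m : ℕ} (v : Fin m → Fin n → ℤ)
    (s : Fin m → MvPolynomial (Fin n) ℝ) (o : MvPolynomial (Fin n) ℝ) (da : ℕ) {k : ℕ} :
    spectrahedron v s o da (k + 1) ⊆ spectrahedron v s o da k := by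
  rintro y ⟨h1, h2, h3, h4⟩
  refine ⟨h1, fun α hα => h2 α (by push_cast at hα ⊢; linarith),
    fun g hg => h3 g (hg.trans (Nat.div_le_div_right (Nat.le_succ k))),
    fun i₀ g hg => h4 i₀ g (hg.trans (Nat.div_le_div_right (by omega)))⟩



/-- **Statement 5** (corollary about moment bounds).  For a reaction network on
`S ⊆ ℕⁿ` with rational propensities `aⱼ = sⱼ/o`, `d ≥ d_o`, and a polynomial `f` of
degree at most `d` with coefficient vector `𝐟`, define
`l_f^d = inf {𝐟ᵀy : y ∈ 𝓔^d}` and `u_f^d = sup {𝐟ᵀy : y ∈ 𝓔^d}` (as extended reals).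
Then for every stationary solution `π` of the CME with finite rational moments of order
up to `d+1` one has `l_f^d ≤ ⟨f/o⟩ ≤ u_f^d`; moreover the bounds are monotone,
`l_f^{d'} ≤ l_f^{d'+1} ≤ ⟨f/o⟩ ≤ u_f^{d'+1} ≤ u_f^{d'}` for all `d' ≥ d`, whenever `π`
has finite rational moments of the corresponding orders. -/
theorem moment_bounds_sdp
    {n m : ℕ} (S : Set (Fin n → ℕ))
    (v : Fin m → Fin n → ℤ) (s : Fin m → MvPolynomial (Fin n) ℝ)
    (o : MvPolynomial (Fin n) ℝ) (d da : ℕ)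
    (ho_pos : ∀ x ∈ S, 0 < eval (fun i => (x i : ℝ)) o)
    (hdo : o.totalDegree ≤ d)
    (hda : ∀ j, (s j).totalDegree ≤ da)
    (a : Fin m → (Fin n → ℕ) → ℝ)
    (ha : ∀ j x, a j x = eval (fun i => (x i : ℝ)) (s j) / eval (fun i => (x i : ℝ)) o)
    (ha_nonneg : ∀ j, ∀ x ∈ S, 0 ≤ a j x)
    (hclosed : ∀ x ∈ S, ∀ j, a j x ≠ 0 → ∃ y ∈ S, ∀ i, (y i : ℤ) = (x i : ℤ) + v j i)
    (q : (Fin n → ℕ) → (Fin n → ℕ) → ℝ)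
    (hq_offdiag : ∀ x y, y ≠ x →
      q x y = ∑ j ∈ Finset.univ.filter (fun j => ∀ i, (y i : ℤ) = (x i : ℤ) + v j i), a j x)
    (hq_diag : ∀ x, q x x = -∑ j, a j x)
    (π : (Fin n → ℕ) → ℝ) (hπ_nonneg : ∀ x, 0 ≤ π x) (hπ_supp : ∀ x ∉ S, π x = 0)
    (hπ_mass : HasSum π 1)
    (hπ_stat : ∀ x ∈ S, HasSum (fun y => π y * q y x) 0)
    (f : MvPolynomial (Fin n) ℝ) (hf : f.totalDegree ≤ d)
    (hmom : HasRatMoments o π (d + 1)) :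
    let L : ℕ → EReal := fun k => ⨅ y ∈ spectrahedron v s o da k,
      ((∑ β ∈ f.support, coeff β f * y β : ℝ) : EReal);
    let U : ℕ → EReal := fun k => ⨆ y ∈ spectrahedron v s o da k,
      ((∑ β ∈ f.support, coeff β f * y β : ℝ) : EReal);
    let M : EReal := ((∑' x : Fin n → ℕ,
      eval (fun i => (x i : ℝ)) f / eval (fun i => (x i : ℝ)) o * π x : ℝ) : EReal);
    (L d ≤ M ∧ M ≤ U d) ∧
      (∀ d' : ℕ, d ≤ d' → HasRatMoments o π (d' + 2) →
        L d' ≤ L (d' + 1) ∧ L (d' + 1) ≤ M ∧ M ≤ U (d' + 1) ∧ U (d' + 1) ≤ U d') := by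
  intro L U M
  have hval : ∑ β ∈ f.support, coeff β f * ratMoment o π β
      = ∑' x : Fin n → ℕ, eval (fun i => (x i : ℝ)) f / eval (fun i => (x i : ℝ)) o * π x :=
    ((tsum_poly_div hmom f (hf.trans (Nat.le_succ d))).2).symm
  have hMeq : M = ((∑ β ∈ f.support, coeff β f * ratMoment o π β : ℝ) : EReal) := by
    show ((∑' x : Fin n → ℕ,
        eval (fun i => (x i : ℝ)) f / eval (fun i => (x i : ℝ)) o * π x : ℝ) : EReal) = _
    rw [hval]
  have hmem : ∀ k : ℕ, o.totalDegree ≤ k → HasRatMoments o π (k + 1) →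
      (fun β => ratMoment o π β) ∈ spectrahedron v s o da k := fun k hk hmk =>
    mem_spectrahedron ho_pos hk hda ha ha_nonneg hclosed hq_offdiag hq_diag
      hπ_nonneg hπ_supp hπ_mass hπ_stat hmk
  have hLle : ∀ k : ℕ, o.totalDegree ≤ k → HasRatMoments o π (k + 1) → L k ≤ M := by
    intro k hk hmk
    rw [hMeq]
    exact iInf₂_le (fun β => ratMoment o π β) (hmem k hk hmk)
  have hUle : ∀ k : ℕ, o.totalDegree ≤ k → HasRatMoments o π (k + 1) → M ≤ U k := by
    intro k hk hmk
    rw [hMeq]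
    exact le_iSup₂ (f := fun y (_ : y ∈ spectrahedron v s o da k) =>
      ((∑ β ∈ f.support, coeff β f * y β : ℝ) : EReal))
      (fun β => ratMoment o π β) (hmem k hk hmk)
  refine ⟨⟨hLle d hdo hmom, hUle d hdo hmom⟩, ?_⟩
  intro d' hdd' hmom'
  have hmom'' : HasRatMoments o π (d' + 1) := fun β hβ => hmom' β (hβ.trans (by omega))
  refine ⟨?_, hLle (d' + 1) (hdo.trans (by omega)) hmom',
    hUle (d' + 1) (hdo.trans (by omega)) hmom', ?_⟩
  · exact le_iInf₂ fun y hy => iInf₂_le y (spectrahedron_antitone v s o da hy)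
  · exact iSup₂_le fun y hy => le_iSup₂
      (f := fun z (_ : z ∈ spectrahedron v s o da d') =>
        ((∑ β ∈ f.support, coeff β f * z β : ℝ) : EReal))
      y (spectrahedron_antitone v s o da hy)
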